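/- Let X be a compact metric space, O a compact subset, and f, g homeomorphisms with supp(g,f) ⊆ O. Then supp(g⁻¹, f⁻¹) ⊆ f(O), and consequently if O is a repelling set for f (i.e., f⁻¹(O) ⊆ interior(O)), then O is a repelling set for g. -/
import Mathlib

open Set Topology

/-- If `supp(g,f) ⊆ O` for a compact set `O`, then `supp(g⁻¹,f⁻¹) ⊆ f(O)`, and
consequently if `O` is a repelling set for `f` (attracting for `f⁻¹`) then `O` is a
repelling set for `g`. -/
theorem supp_inv_subset_image_and_repelling
    {X : Type*} [MetricSpace X] [CompactSpace X] (f g : X ≃ₜ X) (O : Set X)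
    (hO : IsCompact O) (hsupp : closure {x | f x ≠ g x} ⊆ O) :
    closure {x | f.symm x ≠ g.symm x} ⊆ ⇑f '' O ∧
      (⇑f.symm '' O ⊆ interior O → ⇑g.symm '' O ⊆ interior O) := by
  have hsub : {x | f.symm x ≠ g.symm x} ⊆ ⇑f '' O := by
    intro x hx
    refine ⟨f.symm x, hsupp (subset_closure ?_), f.apply_symm_apply x⟩
    intro h
    apply hx
    have : g.symm (f (f.symm x)) = g.symm (g (f.symm x)) := by rw [h]
    simpa using this.symm
  constructor
  · exact closure_minimal hsub ((hO.image f.continuous).isClosed)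
  · intro h
    rintro _ ⟨x, hx, rfl⟩
    by_cases hc : f (g.symm x) = g (g.symm x)
    · have : g.symm x = f.symm x := by
        have := congrArg f.symm hc
        simpa using this
      rw [this]
      exact h ⟨x, hx, rfl⟩
    · exact interior_maximal (subset_closure.trans hsupp)
        (isOpen_ne_fun f.continuous g.continuous) hc
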